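/- arXiv:1202.4525 — 5 statements merged into one kernel-verified Lean document; each statement's English description precedes it below -/
import Mathlib

section
/- The Welch bound: for any M×N matrix F = (f_1,...,f_N) with N ≥ M ≥ 1 whose columns are unit vectors in C^M, the worst-case coherence max_{n≠n'} |⟨f_n, f_{n'}⟩| is at least sqrt((N-M)/(M(N-1))). -/
open scoped InnerProductSpace ComplexConjugate
open Finset

/-- Auxiliary: reorder a four-fold sum. -/
lemma welch_sum_swap {N M : ℕ} (a : Fin N → Fin N → Fin M → Fin M → ℂ) :
    ∑ n, ∑ m, ∑ i, ∑ j, a n m i j = ∑ i, ∑ j, ∑ n, ∑ m, a n m i j := by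
  calc ∑ n, ∑ m, ∑ i, ∑ j, a n m i j
      = ∑ n, ∑ i, ∑ m, ∑ j, a n m i j :=
        Finset.sum_congr rfl fun n _ => Finset.sum_comm
    _ = ∑ i, ∑ n, ∑ m, ∑ j, a n m i j := Finset.sum_comm
    _ = ∑ i, ∑ n, ∑ j, ∑ m, a n m i j :=
        Finset.sum_congr rfl fun i _ => Finset.sum_congr rfl fun n _ => Finset.sum_comm
    _ = ∑ i, ∑ j, ∑ n, ∑ m, a n m i j :=
        Finset.sum_congr rfl fun i _ => Finset.sum_comm

/-- Welch bound: for unit-norm vectors f₁,…,f_N in ℂ^M with N ≥ M ≥ 1 and N > 1,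
the worst-case coherence max_{n ≠ n'} |⟨f_n, f_{n'}⟩| is at least √((N-M)/(M(N-1))). -/
theorem stmt_1 (M N : ℕ) (hM : 1 ≤ M) (hMN : M ≤ N) (hN : 1 < N)
    (f : Fin N → EuclideanSpace ℂ (Fin M)) (hf : ∀ n, ‖f n‖ = 1) :
    ∃ n n' : Fin N, n ≠ n' ∧
      Real.sqrt (((N : ℝ) - M) / (M * ((N : ℝ) - 1))) ≤ ‖⟪f n, f n'⟫_ℂ‖ := by
  classical
  set z : Fin N → Fin N → ℂ := fun n m => ⟪f n, f m⟫_ℂ with hz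
  set T : Fin M → Fin M → ℂ := fun i j => ∑ n, conj (f n i) * f n j with hT
  have hzdef : ∀ n m, z n m = ∑ i, conj (f n i) * f m i := by
    intro n m
    simp only [hz, PiLp.inner_apply, RCLike.inner_apply]
    exact Finset.sum_congr rfl fun i _ => mul_comm _ _
  have hzdiag : ∀ n, z n n = 1 := by
    intro n
    show ⟪f n, f n⟫_ℂ = 1
    rw [inner_self_eq_norm_sq_to_K, hf]
    norm_num
  -- key: "trace of G²" identity
  have hkey : ∑ n, ∑ m, Complex.normSq (z n m) = ∑ i, ∑ j, Complex.normSq (T i j) := by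
    have h : ((∑ n, ∑ m, Complex.normSq (z n m) : ℝ) : ℂ)
        = ((∑ i, ∑ j, Complex.normSq (T i j) : ℝ) : ℂ) := by
      push_cast
      simp only [← Complex.mul_conj]
      calc ∑ n, ∑ m, z n m * conj (z n m)
          = ∑ n, ∑ m, ∑ i, ∑ j,
              (conj (f n i) * f n j) * (f m i * conj (f m j)) := by
            refine Finset.sum_congr rfl fun n _ => Finset.sum_congr rfl fun m _ => ?_
            rw [hzdef, map_sum, Finset.sum_mul_sum]
            refine Finset.sum_congr rfl fun i _ => Finset.sum_congr rfl fun j _ => ?_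
            simp only [map_mul, RingHomCompTriple.comp_apply, RingHom.id_apply,
              Complex.conj_conj]
            ring
        _ = ∑ i, ∑ j, ∑ n, ∑ m,
              (conj (f n i) * f n j) * (f m i * conj (f m j)) :=
            welch_sum_swap _
        _ = ∑ i, ∑ j, T i j * conj (T i j) := by
            refine Finset.sum_congr rfl fun i _ => Finset.sum_congr rfl fun j _ => ?_
            rw [hT, map_sum, Finset.sum_mul_sum]
            refine Finset.sum_congr rfl fun n _ => Finset.sum_congr rfl fun m _ => ?_
            simp only [map_mul, RingHomCompTriple.comp_apply, RingHom.id_apply,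
              Complex.conj_conj]
            try ring
    exact_mod_cast h
  -- unit norms, coordinatewise
  have hnorm1 : ∀ n, ∑ i, Complex.normSq (f n i) = 1 := by
    intro n
    have h1 : ((∑ i, Complex.normSq (f n i) : ℝ) : ℂ) = 1 := by
      push_cast
      simp only [← Complex.mul_conj]
      calc ∑ i, f n i * conj (f n i) = ∑ i, conj (f n i) * f n i :=
            Finset.sum_congr rfl fun i _ => mul_comm _ _
        _ = z n n := (hzdef n n).symm
        _ = 1 := hzdiag n
    exact_mod_cast h1
  set g : Fin M → ℝ := fun i => ∑ n, Complex.normSq (f n i) with hg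
  have hgsum : ∑ i, g i = N := by
    rw [hg]
    rw [Finset.sum_comm]
    simp [hnorm1]
  have hTdiag : ∀ i, T i i = ((g i : ℝ) : ℂ) := by
    intro i
    rw [hT, hg]
    push_cast
    refine Finset.sum_congr rfl fun n _ => ?_
    rw [← Complex.mul_conj]
    ring
  -- Cauchy-Schwarz on the diagonal
  have hCS : (N : ℝ)^2 ≤ (M : ℝ) * ∑ i, (g i)^2 := by
    have := sq_sum_le_card_mul_sum_sq (s := (Finset.univ : Finset (Fin M))) (f := g)
    simpa [hgsum] using this
  have hdiag_le : ∑ i, (g i)^2 ≤ ∑ i, ∑ j, Complex.normSq (T i j) := by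
    refine Finset.sum_le_sum fun i _ => ?_
    have h1 : (g i)^2 = Complex.normSq (T i i) := by
      rw [hTdiag i, Complex.normSq_ofReal]; ring
    rw [h1]
    exact Finset.single_le_sum (fun j _ => Complex.normSq_nonneg _) (Finset.mem_univ i)
  set S : ℝ := ∑ n, ∑ m, Complex.normSq (z n m) with hS
  have hS_ge : (N : ℝ)^2 ≤ (M : ℝ) * S := by
    rw [hkey]
    calc (N : ℝ)^2 ≤ (M : ℝ) * ∑ i, (g i)^2 := hCS
      _ ≤ (M : ℝ) * ∑ i, ∑ j, Complex.normSq (T i j) :=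
          mul_le_mul_of_nonneg_left hdiag_le (Nat.cast_nonneg M)
  -- split off the diagonal
  set off : ℝ := ∑ n, ∑ m ∈ Finset.univ.erase n, Complex.normSq (z n m) with hoff
  have hsplit : S = N + off := by
    rw [hS, hoff]
    calc ∑ n, ∑ m, Complex.normSq (z n m)
        = ∑ n : Fin N, (1 + ∑ m ∈ Finset.univ.erase n, Complex.normSq (z n m)) := by
          refine Finset.sum_congr rfl fun n _ => ?_
          rw [← Finset.add_sum_erase _ _ (Finset.mem_univ n), hzdiag]
          simp
      _ = (N : ℝ) + ∑ n, ∑ m ∈ Finset.univ.erase n, Complex.normSq (z n m) := by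
          rw [Finset.sum_add_distrib]
          simp
  -- maximum off-diagonal correlation
  set P : Finset (Fin N × Fin N) := Finset.univ.filter (fun p => p.1 ≠ p.2) with hP
  have hPne : P.Nonempty := by
    refine ⟨(⟨0, by omega⟩, ⟨1, by omega⟩), ?_⟩
    simp [hP, Fin.ext_iff]
  obtain ⟨p, hpP, hpmax⟩ := P.exists_max_image (fun p => Complex.normSq (z p.1 p.2)) hPne
  set μ : ℝ := Complex.normSq (z p.1 p.2) with hμ
  have hμ0 : 0 ≤ μ := Complex.normSq_nonneg _
  have hoff_le : off ≤ (N : ℝ) * ((N : ℝ) - 1) * μ := by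
    rw [hoff]
    calc ∑ n, ∑ m ∈ Finset.univ.erase n, Complex.normSq (z n m)
        ≤ ∑ n : Fin N, ∑ _m ∈ Finset.univ.erase n, μ := by
          refine Finset.sum_le_sum fun n _ => Finset.sum_le_sum fun m hm => ?_
          have hnm : (n, m) ∈ P := by
            simp only [hP, Finset.mem_filter, Finset.mem_univ, true_and]
            exact fun h => (Finset.mem_erase.1 hm).1 h.symm
          exact hpmax (n, m) hnm
      _ = (N : ℝ) * ((N : ℝ) - 1) * μ := by
          simp only [Finset.sum_const, nsmul_eq_mul,
            Finset.card_erase_of_mem (Finset.mem_univ _), Finset.card_univ, Fintype.card_fin]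
          have hc : ((N - 1 : ℕ) : ℝ) = (N : ℝ) - 1 := by
            have h1 : 1 ≤ N := le_of_lt hN
            push_cast [h1]
            ring
          rw [hc]
          ring
  have hN1 : (1:ℝ) < N := by exact_mod_cast hN
  have hM1 : (1:ℝ) ≤ M := by exact_mod_cast hM
  have hMNr : (M:ℝ) ≤ N := by exact_mod_cast hMN
  have hμ_ge : ((N : ℝ) - M) / ((M : ℝ) * ((N : ℝ) - 1)) ≤ μ := by
    rw [div_le_iff₀ (by nlinarith)]
    have hfull : (N : ℝ)^2 ≤ (M : ℝ) * ((N : ℝ) + (N : ℝ) * ((N : ℝ) - 1) * μ) := by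
      calc (N : ℝ)^2 ≤ (M : ℝ) * S := hS_ge
        _ ≤ (M : ℝ) * ((N : ℝ) + (N : ℝ) * ((N : ℝ) - 1) * μ) := by
            rw [hsplit]
            exact mul_le_mul_of_nonneg_left (by linarith) (by linarith)
    nlinarith
  refine ⟨p.1, p.2, ?_, ?_⟩
  · have := hpP
    simp only [hP, Finset.mem_filter] at this
    exact this.2
  · have h1 : ‖z p.1 p.2‖ = Real.sqrt μ := by
      rw [hμ, Complex.norm_def]
    calc Real.sqrt (((N : ℝ) - M) / (M * ((N : ℝ) - 1)))
        ≤ Real.sqrt μ := Real.sqrt_le_sqrt hμ_ge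
      _ = ‖z p.1 p.2‖ := h1.symm
end

section
/- If F_K is an M×K matrix with unit-norm columns forming a subcollection of an equiangular tight frame (so |⟨f_k, f_{k'}⟩|² = (N−M)/(M(N−1)) for all k ≠ k'), then the maximum over eigenvalues λ of F_K F_K* of |（M/K)λ − 1|² is at most M(M−1)(N−K)/(K(N−1)). -/
open Matrix

lemma aux_traces {n : Type*} [Fintype n] [DecidableEq n] (A : Matrix n n ℂ)
    (hA : A.IsHermitian) :
    A.trace = ∑ i, (hA.eigenvalues i : ℂ) ∧
      (A * A).trace = ∑ i, (hA.eigenvalues i : ℂ) ^ 2 := by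
  set U : Matrix n n ℂ := (hA.eigenvectorUnitary : Matrix n n ℂ) with hU
  set D : Matrix n n ℂ := diagonal (RCLike.ofReal ∘ hA.eigenvalues) with hD
  have h1 : star U * U = 1 := Unitary.coe_star_mul_self _
  have hspec : A = U * D * star U := hA.spectral_theorem
  constructor
  · conv_lhs => rw [hspec]
    rw [trace_mul_cycle, h1, one_mul, hD, trace_diagonal]
    rfl
  · have key : (U * D * star U) * (U * D * star U) = U * (D * D) * star U := by
      calc (U * D * star U) * (U * D * star U)
          = U * (D * ((star U * U) * (D * star U))) := by
            simp only [Matrix.mul_assoc]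
        _ = U * (D * D) * star U := by rw [h1, one_mul]; simp only [Matrix.mul_assoc]
    conv_lhs => rw [hspec]
    rw [key, trace_mul_cycle, h1, one_mul, hD, diagonal_mul_diagonal, trace_diagonal]
    simp [pow_two]

/-- If F_K is an M×K matrix with unit-norm columns coming from an M×N equiangular tight
frame (so |⟨f_k, f_{k'}⟩|² = (N−M)/(M(N−1)) for all k ≠ k'), then each eigenvalue λ
of F_K F_K* satisfies |(M/K)λ − 1|² ≤ M(M−1)(N−K)/(K(N−1)). -/
theorem stmt_3 (M N K : ℕ) (hM : 1 ≤ M) (hN : 1 < N) (hK : 1 ≤ K) (hKN : K ≤ N)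
    (FK : Matrix (Fin M) (Fin K) ℂ)
    (hcols : ∀ k : Fin K, ∑ m : Fin M, (starRingEnd ℂ) (FK m k) * FK m k = 1)
    (hang : ∀ k k' : Fin K, k ≠ k' →
      ‖∑ m : Fin M, (starRingEnd ℂ) (FK m k) * FK m k'‖ ^ 2
        = ((N : ℝ) - M) / (M * ((N : ℝ) - 1))) :
    ∀ i : Fin M,
      |(M : ℝ) / K * (Matrix.isHermitian_mul_conjTranspose_self FK).eigenvalues i - 1| ^ 2
        ≤ (M : ℝ) * ((M : ℝ) - 1) * ((N : ℝ) - K) / (K * ((N : ℝ) - 1)) := by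
  intro i
  set μ2 : ℝ := ((N : ℝ) - M) / (M * ((N : ℝ) - 1)) with hμ2
  set x : Fin M → ℝ := (Matrix.isHermitian_mul_conjTranspose_self FK).eigenvalues with hx
  obtain ⟨ht1, ht2⟩ := aux_traces (FK * FKᴴ) (Matrix.isHermitian_mul_conjTranspose_self FK)
  set B : Matrix (Fin K) (Fin K) ℂ := FKᴴ * FK with hB
  have hBapp : ∀ k k', B k k' = ∑ m, (starRingEnd ℂ) (FK m k) * FK m k' := by
    intro k k'
    simp [hB, Matrix.mul_apply, Matrix.conjTranspose_apply, RCLike.star_def]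
  have hBdiag : ∀ k, B k k = 1 := fun k => (hBapp k k).trans (hcols k)
  have hBherm : B.IsHermitian := Matrix.isHermitian_conjTranspose_mul_self FK
  -- trace identities
  have htr1 : (FK * FKᴴ).trace = (K : ℂ) := by
    rw [Matrix.trace_mul_comm, Matrix.trace]
    simp only [Matrix.diag_apply, ← hB]
    simp [hBdiag]
  have htr2 : ((FK * FKᴴ) * (FK * FKᴴ)).trace
      = ((K : ℝ) + K * ((K : ℝ) - 1) * μ2 : ℝ) := by
    have hassoc : (FK * FKᴴ) * (FK * FKᴴ) = FK * ((FKᴴ * FK) * FKᴴ) := by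
      simp only [Matrix.mul_assoc]
    rw [hassoc, Matrix.trace_mul_comm, Matrix.mul_assoc, ← hB, Matrix.trace]
    have hterm : ∀ a b : Fin K, B a b * B b a = ((‖B a b‖ ^ 2 : ℝ) : ℂ) := by
      intro a b
      have h1 : B b a = (starRingEnd ℂ) (B a b) := (hBherm.apply b a).symm
      rw [h1, Complex.mul_conj, Complex.normSq_eq_norm_sq]
    have hdsum : ∀ k : Fin K, (B * B) k k = ((1 : ℝ) + ((K : ℝ) - 1) * μ2 : ℝ) := by
      intro k
      rw [Matrix.mul_apply]
      have : ∀ k' : Fin K, B k k' * B k' k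
          = if k' = k then ((1:ℝ):ℂ) else ((μ2 : ℝ) : ℂ) := by
        intro k'
        by_cases h : k' = k
        · simp [h, hBdiag]
        · rw [hterm k k']
          have hh := hang k k' (fun hc => h hc.symm)
          rw [← hBapp k k'] at hh
          rw [hh]
          simp [h]
      rw [Finset.sum_congr rfl fun k' _ => this k', Finset.sum_ite, Finset.sum_const,
        Finset.sum_const, Finset.filter_eq', Finset.filter_ne']
      simp only [Finset.mem_univ, if_true, Finset.card_singleton, Finset.card_erase_of_mem,
        Finset.card_univ, Fintype.card_fin, nsmul_eq_mul]
      push_cast [Nat.cast_sub hK]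
      ring
    simp only [Matrix.diag_apply]
    rw [Finset.sum_congr rfl fun k _ => hdsum k, Finset.sum_const, Finset.card_univ,
      Fintype.card_fin, nsmul_eq_mul]
    push_cast
    ring
  have hS1 : ∑ j, x j = (K : ℝ) := by exact_mod_cast ht1.symm.trans htr1
  have hS2 : ∑ j, (x j) ^ 2 = (K : ℝ) + K * ((K : ℝ) - 1) * μ2 := by
    exact_mod_cast ht2.symm.trans htr2
  have hKne : (K : ℝ) ≠ 0 := Nat.cast_ne_zero.mpr (by omega)
  have hMne : (M : ℝ) ≠ 0 := Nat.cast_ne_zero.mpr (by omega)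
  have hNne : (N : ℝ) - 1 ≠ 0 := by
    have : (1 : ℝ) < N := by exact_mod_cast hN
    linarith
  have key : ∑ j, ((M : ℝ) / K * x j - 1) ^ 2
      = (M : ℝ) * ((M : ℝ) - 1) * ((N : ℝ) - K) / (K * ((N : ℝ) - 1)) := by
    have expand : ∀ j : Fin M, ((M : ℝ) / K * x j - 1) ^ 2
        = ((M : ℝ) / K) ^ 2 * (x j) ^ 2 - 2 * ((M : ℝ) / K) * x j + 1 := fun j => by ring
    rw [Finset.sum_congr rfl fun j _ => expand j, Finset.sum_add_distrib,
      Finset.sum_sub_distrib, ← Finset.mul_sum, ← Finset.mul_sum, hS1, hS2,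
      Finset.sum_const, Finset.card_univ, Fintype.card_fin, nsmul_eq_mul, mul_one, hμ2]
    field_simp
    ring
  have hle : ((M : ℝ) / K * x i - 1) ^ 2
      ≤ (M : ℝ) * ((M : ℝ) - 1) * ((N : ℝ) - K) / (K * ((N : ℝ) - 1)) := by
    rw [← key]
    exact Finset.single_le_sum (f := fun j => ((M : ℝ) / K * x j - 1) ^ 2)
      (fun j _ => sq_nonneg _) (Finset.mem_univ i)
  rw [sq_abs]
  exact hle
end

section
/- Let F be an M×N equiangular tight frame with (N−1)/(M(M−1)) ≥ α > 0, let C ≥ 1, and let p ≤ α(C²−1)²/(α(C²−1)² + (C²+1)²). Then for every subset K of the columns of size K = (1−p)N, the submatrix F_K has condition number at most C. -/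
open Matrix in
lemma traceEig {n : Type*} [Fintype n] [DecidableEq n] {A : Matrix n n ℂ}
    (hA : A.IsHermitian) : A.trace = ∑ i, (hA.eigenvalues i : ℂ) := by
  conv_lhs => rw [hA.spectral_theorem, Unitary.conjStarAlgAut_apply]
  rw [Matrix.trace_mul_cycle,
    (Matrix.mem_unitaryGroup_iff').mp (Matrix.IsHermitian.eigenvectorUnitary hA).2, one_mul,
    Matrix.trace_diagonal]
  rfl

open Matrix in
lemma traceSqEig {n : Type*} [Fintype n] [DecidableEq n] {A : Matrix n n ℂ}
    (hA : A.IsHermitian) : (A * A).trace = ∑ i, (hA.eigenvalues i : ℂ) ^ 2 := by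
  have h1 : (star (Matrix.IsHermitian.eigenvectorUnitary hA) : Matrix n n ℂ) *
      (Matrix.IsHermitian.eigenvectorUnitary hA : Matrix n n ℂ) = 1 :=
    (Matrix.mem_unitaryGroup_iff').mp (Matrix.IsHermitian.eigenvectorUnitary hA).2
  conv_lhs => rw [hA.spectral_theorem, Unitary.conjStarAlgAut_apply]
  set U := (Matrix.IsHermitian.eigenvectorUnitary hA : Matrix n n ℂ)
  set D := Matrix.diagonal ((RCLike.ofReal : ℝ → ℂ) ∘ hA.eigenvalues)
  have h2 : (U * D * star U) * (U * D * star U) = U * (D * D) * star U := by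
    simp only [Matrix.mul_assoc]
    rw [← Matrix.mul_assoc (star U) U, h1, Matrix.one_mul]
  rw [h2, Matrix.trace_mul_cycle, ← Matrix.mul_assoc, h1, one_mul,
    Matrix.diagonal_mul_diagonal, Matrix.trace_diagonal]
  simp [sq]

set_option maxHeartbeats 2000000 in
/-- Every M×N equiangular tight frame with (N−1)/(M(M−1)) ≥ α > 0 is a
(p,C)-numerically erasure-robust frame for every
p ≤ α(C²−1)²/(α(C²−1)² + (C²+1)²): for each subset 𝒦 of columns of size (1−p)N,
the submatrix F_𝒦 has condition number (ratio of extreme singular values) at most C,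
i.e. λmax(F_𝒦 F_𝒦*) ≤ C² λmin(F_𝒦 F_𝒦*). -/
theorem stmt_4 (M N : ℕ) (hM : 1 ≤ M) (hN : 1 < N)
    (F : Matrix (Fin M) (Fin N) ℂ)
    (hcols : ∀ n : Fin N, ∑ m : Fin M, (starRingEnd ℂ) (F m n) * F m n = 1)
    (htight : F * F.conjTranspose = ((N : ℂ) / M) • (1 : Matrix (Fin M) (Fin M) ℂ))
    (hang : ∀ n n' : Fin N, n ≠ n' →
      ‖∑ m : Fin M, (starRingEnd ℂ) (F m n) * F m n'‖ ^ 2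
        = ((N : ℝ) - M) / (M * ((N : ℝ) - 1)))
    (α : ℝ) (hα : 0 < α) (hαF : α ≤ ((N : ℝ) - 1) / (M * ((M : ℝ) - 1)))
    (C : ℝ) (hC : 1 ≤ C)
    (p : ℝ) (hp0 : 0 ≤ p)
    (hp : p ≤ α * (C ^ 2 - 1) ^ 2 / (α * (C ^ 2 - 1) ^ 2 + (C ^ 2 + 1) ^ 2))
    (𝒦 : Finset (Fin N)) (h𝒦pos : 0 < 𝒦.card) (h𝒦 : (𝒦.card : ℝ) = (1 - p) * N) :
    (⨆ i : Fin M,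
        (Matrix.isHermitian_mul_conjTranspose_self
          (F.submatrix id (fun k : {n // n ∈ 𝒦} => (k : Fin N)))).eigenvalues i)
      ≤ C ^ 2 *
      (⨅ i : Fin M,
        (Matrix.isHermitian_mul_conjTranspose_self
          (F.submatrix id (fun k : {n // n ∈ 𝒦} => (k : Fin N)))).eigenvalues i) := by
  classical
  -- basic positivity facts
  have hMr : (0:ℝ) < (M:ℝ) := by exact_mod_cast Nat.lt_of_lt_of_le Nat.zero_lt_one hM
  have hNr : (0:ℝ) < (N:ℝ) := by positivity
  have hNr1 : (0:ℝ) < (N:ℝ) - 1 := by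
    have : (1:ℝ) < (N:ℝ) := by exact_mod_cast hN
    linarith
  have hK0 : (0:ℝ) < (𝒦.card : ℝ) := by exact_mod_cast h𝒦pos
  have ht1 : (1:ℝ) ≤ C ^ 2 := by nlinarith
  have h1p : 0 < 1 - p := by
    by_contra h
    push_neg at h
    nlinarith [hK0, h𝒦, hNr]
  have hpC : p * (C ^ 2 + 1)^2 ≤ α * (C ^ 2 - 1)^2 * (1-p) := by
    have hD : 0 < α * (C ^ 2 - 1) ^ 2 + (C ^ 2 + 1) ^ 2 := by positivity
    have h2 : p * (α * (C ^ 2 - 1) ^ 2 + (C ^ 2 + 1) ^ 2) ≤ α * (C ^ 2 - 1) ^ 2 :=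
      (le_div_iff₀ hD).mp hp
    nlinarith [h2]
  have hαM : α * ((M:ℝ) - 1)^2 ≤ (N:ℝ) - 1 := by
    by_cases hMM : M = 1
    · subst hMM
      norm_num
      linarith
    · have hM2 : 2 ≤ M := by omega
      have hM2' : (2:ℝ) ≤ (M:ℝ) := by exact_mod_cast hM2
      have hpos : 0 < (M:ℝ) * ((M:ℝ) - 1) := by nlinarith
      have h3 : α * ((M:ℝ) * ((M:ℝ) - 1)) ≤ (N:ℝ) - 1 := by
        have := (le_div_iff₀ hpos).mp hαF
        linarith
      nlinarith [h3, mul_nonneg hα.le (sub_nonneg.mpr (show (1:ℝ) ≤ (M:ℝ) by linarith))]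
  -- matrix part
  set A : Matrix (Fin M) {n // n ∈ 𝒦} ℂ :=
    F.submatrix id (fun k : {n // n ∈ 𝒦} => (k : Fin N)) with hAdef
  set lam : Fin M → ℝ := (Matrix.isHermitian_mul_conjTranspose_self A).eigenvalues with hlam
  have hsum : ∑ i, lam i = (𝒦.card : ℝ) := by
    have hHentry : ∀ k k' : {n // n ∈ 𝒦},
        (A.conjTranspose * A) k k'
          = ∑ m : Fin M, (starRingEnd ℂ) (F m (k : Fin N)) * F m (k' : Fin N) := by
      intro k k'
      simp only [Matrix.mul_apply, Matrix.conjTranspose_apply, hAdef,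
        Matrix.submatrix_apply, id_eq, Complex.star_def]
    have key1 : (A * A.conjTranspose).trace = ((𝒦.card : ℝ) : ℂ) := by
      rw [Matrix.trace_mul_comm, Matrix.trace]
      have hd : ∀ k : {n // n ∈ 𝒦}, (A.conjTranspose * A).diag k = 1 := by
        intro k
        rw [Matrix.diag_apply, hHentry]
        exact hcols (k : Fin N)
      rw [Finset.sum_congr rfl fun k _ => hd k, Finset.sum_const, Finset.card_univ,
        Fintype.card_coe, nsmul_eq_mul, mul_one]
      norm_num
    have e := traceEig (Matrix.isHermitian_mul_conjTranspose_self A)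
    rw [← hlam] at e
    have e2 := e.symm.trans key1
    exact_mod_cast e2
  have hsq : ∑ i, (lam i)^2
      = (𝒦.card : ℝ) + (𝒦.card : ℝ) * ((𝒦.card : ℝ) - 1)
          * (((N:ℝ) - M) / (M * ((N:ℝ) - 1))) := by
    have hHentry : ∀ k k' : {n // n ∈ 𝒦},
        (A.conjTranspose * A) k k'
          = ∑ m : Fin M, (starRingEnd ℂ) (F m (k : Fin N)) * F m (k' : Fin N) := by
      intro k k'
      simp only [Matrix.mul_apply, Matrix.conjTranspose_apply, hAdef,
        Matrix.submatrix_apply, id_eq, Complex.star_def]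
    have hHdiag : ∀ k : {n // n ∈ 𝒦}, (A.conjTranspose * A) k k = 1 := by
      intro k
      rw [hHentry]
      exact hcols (k : Fin N)
    have hherm : ∀ k k' : {n // n ∈ 𝒦},
        (A.conjTranspose * A) k' k = (starRingEnd ℂ) ((A.conjTranspose * A) k k') := by
      intro k k'
      rw [hHentry, hHentry, map_sum]
      refine Finset.sum_congr rfl fun m _ => ?_
      rw [map_mul, Complex.conj_conj, mul_comm]
    have key2 : ((A * A.conjTranspose) * (A * A.conjTranspose)).trace
        = (((𝒦.card : ℝ) + (𝒦.card : ℝ) * ((𝒦.card : ℝ) - 1)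
            * (((N:ℝ) - M) / (M * ((N:ℝ) - 1))) : ℝ) : ℂ) := by
      have e1 : (A * A.conjTranspose) * (A * A.conjTranspose)
          = A * ((A.conjTranspose * A) * A.conjTranspose) := by
        simp only [Matrix.mul_assoc]
      rw [e1, Matrix.trace_mul_comm, Matrix.mul_assoc, Matrix.trace]
      have hdiagHH : ∀ k : {n // n ∈ 𝒦},
          ((A.conjTranspose * A) * (A.conjTranspose * A)).diag k
            = ((1 + ((𝒦.card : ℝ) - 1) * (((N:ℝ) - M) / (M * ((N:ℝ) - 1))) : ℝ) : ℂ) := by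
        intro k
        rw [Matrix.diag_apply, Matrix.mul_apply]
        have hterm : ∀ k' : {n // n ∈ 𝒦},
            (A.conjTranspose * A) k k' * (A.conjTranspose * A) k' k
              = ((‖(A.conjTranspose * A) k k'‖^2 : ℝ) : ℂ) := by
          intro k'
          rw [hherm k k', Complex.mul_conj']
          norm_cast
        rw [Finset.sum_congr rfl fun k' _ => hterm k']
        rw [← Finset.sum_erase_add Finset.univ _ (Finset.mem_univ k)]
        have hoffval : ∀ k' ∈ Finset.univ.erase k,
            ((‖(A.conjTranspose * A) k k'‖^2 : ℝ) : ℂ)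
              = ((((N:ℝ) - M) / (M * ((N:ℝ) - 1)) : ℝ) : ℂ) := by
          intro k' hk'
          have hkk : k ≠ k' := (Finset.ne_of_mem_erase hk').symm
          rw [hHentry, hang _ _ (Subtype.coe_ne_coe.mpr hkk)]
        rw [Finset.sum_congr rfl hoffval, Finset.sum_const, hHdiag k]
        rw [Finset.card_erase_of_mem (Finset.mem_univ k), Finset.card_univ, Fintype.card_coe]
        rw [nsmul_eq_mul]
        norm_num
        push_cast [Nat.cast_sub (Nat.one_le_iff_ne_zero.mpr (Nat.pos_iff_ne_zero.mp h𝒦pos))]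
        ring
      rw [Finset.sum_congr rfl fun k _ => hdiagHH k]
      rw [Finset.sum_const, Finset.card_univ, Fintype.card_coe, nsmul_eq_mul]
      push_cast
      ring
    have e := traceSqEig (Matrix.isHermitian_mul_conjTranspose_self A)
    rw [← hlam] at e
    have e2 := e.symm.trans key2
    exact_mod_cast e2
  -- from now on, forget the matrices
  clear_value lam A
  clear hlam hAdef htight hang hcols A hp hαF F
  have hcard_erase : ∀ j : Fin M, ((Finset.univ.erase j).card : ℝ) = (M:ℝ) - 1 := by
    intro j
    rw [Finset.card_erase_of_mem (Finset.mem_univ j), Finset.card_univ, Fintype.card_fin,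
      Nat.cast_sub hM, Nat.cast_one]
  have hεsum : ∑ i, ((M:ℝ) * lam i - (𝒦.card:ℝ)) = 0 := by
    rw [Finset.sum_sub_distrib, ← Finset.mul_sum, hsum, Finset.sum_const, Finset.card_univ,
      Fintype.card_fin, nsmul_eq_mul]
    ring
  have hεsq : ∑ i, ((M:ℝ) * lam i - (𝒦.card:ℝ))^2
      = (M:ℝ)^2 * ((𝒦.card:ℝ) + (𝒦.card:ℝ)*((𝒦.card:ℝ)-1)*(((N:ℝ)-M)/(M*((N:ℝ)-1))))
        - (M:ℝ)*(𝒦.card:ℝ)^2 := by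
    have hexp : ∀ i : Fin M, ((M:ℝ)*lam i - (𝒦.card:ℝ))^2
        = (M:ℝ)^2*(lam i)^2 - (2*(M:ℝ)*(𝒦.card:ℝ))*lam i + (𝒦.card:ℝ)^2 := fun i => by ring
    rw [Finset.sum_congr rfl fun i _ => hexp i]
    rw [Finset.sum_add_distrib, Finset.sum_sub_distrib, ← Finset.mul_sum, ← Finset.mul_sum,
      Finset.sum_const, Finset.card_univ, Fintype.card_fin, nsmul_eq_mul, hsum, hsq]
    ring
  obtain ⟨SE, hSE⟩ : ∃ SE : ℝ,
      SE = (M:ℝ)^2 * ((𝒦.card:ℝ) + (𝒦.card:ℝ)*((𝒦.card:ℝ)-1)*(((N:ℝ)-M)/(M*((N:ℝ)-1))))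
        - (M:ℝ)*(𝒦.card:ℝ)^2 := ⟨_, rfl⟩
  have hSig : ∑ i, ((M:ℝ) * lam i - (𝒦.card:ℝ))^2 = SE := hεsq.trans hSE.symm
  have hSid : SE * ((N:ℝ)-1) = (M:ℝ)*(𝒦.card:ℝ)*((M:ℝ)-1)*((N:ℝ)-(𝒦.card:ℝ)) := by
    rw [hSE]
    field_simp
    ring
  have hcs : ∀ j : Fin M, (M:ℝ) * ((M:ℝ)*lam j - (𝒦.card:ℝ))^2 ≤ ((M:ℝ) - 1) * SE := by
    intro j
    have h2 : (∑ i ∈ Finset.univ.erase j, ((M:ℝ)*lam i - (𝒦.card:ℝ)))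
        + ((M:ℝ)*lam j - (𝒦.card:ℝ)) = 0 := by
      rw [Finset.sum_erase_add Finset.univ _ (Finset.mem_univ j)]
      exact hεsum
    have h5 : (∑ i ∈ Finset.univ.erase j, ((M:ℝ)*lam i - (𝒦.card:ℝ))^2)
        + ((M:ℝ)*lam j - (𝒦.card:ℝ))^2 = SE := by
      rw [Finset.sum_erase_add Finset.univ _ (Finset.mem_univ j)]
      exact hSig
    have h1 : ∑ i ∈ Finset.univ.erase j, ((M:ℝ)*lam i - (𝒦.card:ℝ))
        = -(((M:ℝ)*lam j - (𝒦.card:ℝ))) := by linarith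
    have h4 : ∑ i ∈ Finset.univ.erase j, ((M:ℝ)*lam i - (𝒦.card:ℝ))^2
        = SE - ((M:ℝ)*lam j - (𝒦.card:ℝ))^2 := by linarith
    have h3 : (∑ i ∈ Finset.univ.erase j, ((M:ℝ)*lam i - (𝒦.card:ℝ)))^2
        ≤ ((Finset.univ.erase j).card : ℝ)
          * ∑ i ∈ Finset.univ.erase j, ((M:ℝ)*lam i - (𝒦.card:ℝ))^2 :=
      sq_sum_le_card_mul_sum_sq
    rw [h1, h4, hcard_erase j] at h3
    nlinarith [h3]
  have hkey : ∀ j : Fin M,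
      ((C^2+1) * ((M:ℝ)*lam j - (𝒦.card:ℝ)))^2 ≤ ((C^2-1) * (𝒦.card:ℝ))^2 := by
    intro j
    have hNK : (N:ℝ) - (𝒦.card:ℝ) = p * N := by rw [h𝒦]; ring
    have hpoly : (C^2+1)^2*((M:ℝ)-1)^2*((N:ℝ)-(𝒦.card:ℝ))
        ≤ (C^2-1)^2*(𝒦.card:ℝ)*((N:ℝ)-1) := by
      have c1 : ((M:ℝ)-1)^2 * (p*(C^2+1)^2) ≤ ((M:ℝ)-1)^2 * (α*(C^2-1)^2*(1-p)) :=
        mul_le_mul_of_nonneg_left hpC (sq_nonneg _)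
      have c2 : (α*((M:ℝ)-1)^2) * ((C^2-1)^2*(1-p)) ≤ ((N:ℝ)-1) * ((C^2-1)^2*(1-p)) :=
        mul_le_mul_of_nonneg_right hαM (by positivity)
      have c3 : ((M:ℝ)-1)^2 * (p*(C^2+1)^2) ≤ ((N:ℝ)-1) * ((C^2-1)^2*(1-p)) := by
        nlinarith [c1, c2]
      have c4 := mul_le_mul_of_nonneg_right c3 hNr.le
      rw [hNK, h𝒦]
      nlinarith [c4]
    have e5 : ((M:ℝ)*(𝒦.card:ℝ)) * ((C^2+1)^2*((M:ℝ)-1)^2*((N:ℝ)-(𝒦.card:ℝ)))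
        ≤ ((M:ℝ)*(𝒦.card:ℝ)) * ((C^2-1)^2*(𝒦.card:ℝ)*((N:ℝ)-1)) :=
      mul_le_mul_of_nonneg_left hpoly (by positivity)
    have d1 : ((C^2+1)^2*(((M:ℝ)-1)*SE))*((N:ℝ)-1)
        ≤ ((M:ℝ)*((C^2-1)*(𝒦.card:ℝ))^2)*((N:ℝ)-1) := by
      calc ((C^2+1)^2*(((M:ℝ)-1)*SE))*((N:ℝ)-1)
          = (C^2+1)^2*((M:ℝ)-1)*(SE*((N:ℝ)-1)) := by ring
        _ = (C^2+1)^2*((M:ℝ)-1)*((M:ℝ)*(𝒦.card:ℝ)*((M:ℝ)-1)*((N:ℝ)-(𝒦.card:ℝ))) := by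
            rw [hSid]
        _ = ((M:ℝ)*(𝒦.card:ℝ)) * ((C^2+1)^2*((M:ℝ)-1)^2*((N:ℝ)-(𝒦.card:ℝ))) := by ring
        _ ≤ ((M:ℝ)*(𝒦.card:ℝ)) * ((C^2-1)^2*(𝒦.card:ℝ)*((N:ℝ)-1)) := e5
        _ = ((M:ℝ)*((C^2-1)*(𝒦.card:ℝ))^2)*((N:ℝ)-1) := by ring
    have d2 : (C^2+1)^2*(((M:ℝ)-1)*SE) ≤ (M:ℝ)*((C^2-1)*(𝒦.card:ℝ))^2 :=
      le_of_mul_le_mul_right d1 hNr1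
    have d3 : (M:ℝ) * ((C^2+1) * ((M:ℝ)*lam j - (𝒦.card:ℝ)))^2
        ≤ (M:ℝ)*((C^2-1)*(𝒦.card:ℝ))^2 := by
      calc (M:ℝ) * ((C^2+1) * ((M:ℝ)*lam j - (𝒦.card:ℝ)))^2
          = (C^2+1)^2 * ((M:ℝ) * ((M:ℝ)*lam j - (𝒦.card:ℝ))^2) := by ring
        _ ≤ (C^2+1)^2 * (((M:ℝ) - 1) * SE) :=
            mul_le_mul_of_nonneg_left (hcs j) (by positivity)
        _ ≤ (M:ℝ)*((C^2-1)*(𝒦.card:ℝ))^2 := d2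
    exact le_of_mul_le_mul_left d3 hMr
  have habs : ∀ j, |(C^2+1) * ((M:ℝ)*lam j - (𝒦.card:ℝ))| ≤ (C^2-1)*(𝒦.card:ℝ) := fun j =>
    abs_le_of_sq_le_sq (hkey j) (by nlinarith [hK0, ht1])
  have hmain : ∀ i j : Fin M, lam i ≤ C^2 * lam j := by
    intro i j
    have hi := (abs_le.mp (habs i)).2
    have hj := (abs_le.mp (habs j)).1
    have e6 : (C^2+1) * ((M:ℝ)*lam i) ≤ 2*C^2*(𝒦.card:ℝ) := by nlinarith [hi]
    have e7 : 2*(𝒦.card:ℝ) ≤ (C^2+1) * ((M:ℝ)*lam j) := by nlinarith [hj]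
    have e8 : 2*C^2*(𝒦.card:ℝ) ≤ C^2*((C^2+1) * ((M:ℝ)*lam j)) := by
      have := mul_le_mul_of_nonneg_left e7 (by positivity : (0:ℝ) ≤ C^2)
      nlinarith [this]
    have e9 : (C^2+1) * ((M:ℝ)*lam i) ≤ (C^2+1) * ((M:ℝ)*(C^2*lam j)) := by
      nlinarith [e6, e8]
    have e10 : (M:ℝ)*lam i ≤ (M:ℝ)*(C^2*lam j) :=
      le_of_mul_le_mul_left e9 (by positivity)
    exact le_of_mul_le_mul_left e10 hMr
  have hne : Nonempty (Fin M) := ⟨⟨0, hM⟩⟩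
  obtain ⟨j0, hj0mem, hj0⟩ :=
    Finset.exists_min_image Finset.univ lam ⟨⟨0, hM⟩, Finset.mem_univ _⟩
  refine ciSup_le fun i => ?_
  calc lam i ≤ C^2 * lam j0 := hmain i j0
    _ ≤ C^2 * ⨅ j, lam j := by
        have h11 : lam j0 ≤ ⨅ j, lam j := le_ciInf fun j => hj0 j (Finset.mem_univ j)
        exact mul_le_mul_of_nonneg_left h11 (by positivity)
end

section
/- Let y ∈ C^{M+1} be a nonzero vector orthogonal to the all-ones vector, with M ≥ 1. If z ∈ C^{M+1} is orthogonal to the all-ones vector and satisfies ⟨z, Py⟩ = 0 for every (M+1)×(M+1) permutation matrix P, then z = 0. -/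
/-- Let y ∈ ℂ^{M+1} be nonzero and orthogonal to the all-ones vector, M ≥ 1.
If z ∈ ℂ^{M+1} is orthogonal to the all-ones vector and ⟨z, Py⟩ = 0 for every
permutation P of coordinates, then z = 0. -/
theorem stmt_9 (M : ℕ) (hM : 1 ≤ M) (y z : Fin (M + 1) → ℂ)
    (hy0 : y ≠ 0) (hy : ∑ i, y i = 0) (hz : ∑ i, z i = 0)
    (horth : ∀ σ : Equiv.Perm (Fin (M + 1)),
      ∑ i, (starRingEnd ℂ) (z i) * y (σ i) = 0) :
    z = 0 := by
  -- y is not constant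
  obtain ⟨p, q, hpqy⟩ : ∃ p q, y p ≠ y q := by
    by_contra h
    push_neg at h
    apply hy0
    funext i
    have hconst : ∀ i, y i = y 0 := fun i => h i 0
    have hsum : ∑ i, y i = ((M + 1 : ℕ) : ℂ) * y 0 := by
      rw [Finset.sum_congr rfl fun i _ => hconst i]
      simp [Finset.sum_const, Finset.card_univ, nsmul_eq_mul]
    rw [hy] at hsum
    have hM1 : ((M + 1 : ℕ) : ℂ) ≠ 0 := Nat.cast_ne_zero.mpr (Nat.succ_ne_zero M)
    have h0 : y 0 = 0 := by
      rcases mul_eq_zero.mp hsum.symm with h | h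
      · exact absurd h hM1
      · exact h
    rw [hconst i, h0]
    rfl
  have hpq : p ≠ q := fun h => hpqy (by rw [h])
  -- z is constant
  have hz_const : ∀ a b, z a = z b := by
    intro a b
    rcases eq_or_ne a b with rfl | hab
    · rfl
    have hb' : (Equiv.swap a p) b ≠ p := by
      intro h
      apply hab
      exact (Equiv.swap a p).injective (by rw [h, Equiv.swap_apply_left])
    set σ : Equiv.Perm (Fin (M + 1)) :=
      (Equiv.swap a p).trans (Equiv.swap ((Equiv.swap a p) b) q) with hσdef
    have hσa : σ a = p := by
      simp only [hσdef, Equiv.trans_apply, Equiv.swap_apply_left]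
      exact Equiv.swap_apply_of_ne_of_ne (Ne.symm hb') hpq
    have hσb : σ b = q := by
      simp only [hσdef, Equiv.trans_apply, Equiv.swap_apply_left]
    set τ : Equiv.Perm (Fin (M + 1)) := (Equiv.swap a b).trans σ with hτdef
    have hτa : τ a = q := by
      simp only [hτdef, Equiv.trans_apply, Equiv.swap_apply_left, hσb]
    have hτb : τ b = p := by
      simp only [hτdef, Equiv.trans_apply, Equiv.swap_apply_right, hσa]
    have key : ∑ i, (starRingEnd ℂ) (z i) * (y (σ i) - y (τ i)) = 0 := by
      simp only [mul_sub, Finset.sum_sub_distrib, horth σ, horth τ, sub_zero]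
    have key2 : ∑ i, (starRingEnd ℂ) (z i) * (y (σ i) - y (τ i)) =
        ((starRingEnd ℂ) (z a) - (starRingEnd ℂ) (z b)) * (y p - y q) := by
      rw [← Finset.sum_subset (Finset.subset_univ ({a, b} : Finset (Fin (M + 1))))
        (fun i _ hi => by
          simp only [Finset.mem_insert, Finset.mem_singleton, not_or] at hi
          have : τ i = σ i := by
            simp only [hτdef, Equiv.trans_apply,
              Equiv.swap_apply_of_ne_of_ne hi.1 hi.2]
          rw [this, sub_self, mul_zero])]
      rw [Finset.sum_pair hab, hσa, hσb, hτa, hτb]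
      ring
    rw [key2] at key
    have hyne : y p - y q ≠ 0 := sub_ne_zero.mpr hpqy
    have : (starRingEnd ℂ) (z a) - (starRingEnd ℂ) (z b) = 0 := by
      rcases mul_eq_zero.mp key with h | h
      · exact h
      · exact absurd h hyne
    have := sub_eq_zero.mp this
    exact (starRingEnd ℂ).injective this
  -- conclude z = 0
  have hsum : ((M + 1 : ℕ) : ℂ) * z 0 = 0 := by
    calc ((M + 1 : ℕ) : ℂ) * z 0 = ∑ _i : Fin (M + 1), z 0 := by
          simp [Finset.sum_const, Finset.card_univ, nsmul_eq_mul]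
      _ = ∑ i, z i := Finset.sum_congr rfl fun i _ => hz_const 0 i
      _ = 0 := hz
  have hM1 : ((M + 1 : ℕ) : ℂ) ≠ 0 := Nat.cast_ne_zero.mpr (Nat.succ_ne_zero M)
  have h0 : z 0 = 0 := by
    rcases mul_eq_zero.mp hsum with h | h
    · exact absurd h hM1
    · exact h
  funext i
  rw [hz_const i 0, h0]
  rfl
end

section
/- Fix C > 0 and let θ_M ∈ (0, π/2) satisfy cos²θ_M = C²/M (for M > C²). Then the ratio (∫_0^{θ_M} sin^{M−2}φ dφ) / (∫_0^{π/2} sin^{M−2}φ dφ) converges, as M → ∞, to 2Q(C) = 2·(1/√(2π))∫_C^∞ e^{−u²/2} du. -/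
open Real Filter

section Helpers
open MeasureTheory Set

noncomputable def gfun (M : ℕ) (u : ℝ) : ℝ := (max (1 - u^2 / M) 0) ^ (((M:ℝ) - 3)/2)

lemma g_nonneg (M : ℕ) (u : ℝ) : 0 ≤ gfun M u :=
  Real.rpow_nonneg (le_max_right _ _) _

lemma g_cont {M : ℕ} (hM : 3 ≤ M) : Continuous (gfun M) := by
  apply Continuous.rpow_const (by fun_prop)
  intro x
  right
  have : (3:ℝ) ≤ M := by exact_mod_cast hM
  linarith

lemma g_zero {M : ℕ} (hM : 4 ≤ M) {u : ℝ} (hu : (M:ℝ) ≤ u^2) : gfun M u = 0 := by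
  have hM0 : (0:ℝ) < M := by positivity
  have : max (1 - u^2/M) 0 = 0 := by
    rw [max_eq_right]
    rw [sub_nonpos]
    · rw [le_div_iff₀ hM0]; linarith
  rw [gfun, this]
  apply Real.zero_rpow
  have h4 : (4:ℝ) ≤ M := by exact_mod_cast hM
  have : (0:ℝ) < ((M:ℝ)-3)/2 := by linarith
  exact ne_of_gt this

lemma g_tendsto (u : ℝ) :
    Tendsto (fun M : ℕ => gfun M u) atTop (nhds (Real.exp (-u^2/2))) := by
  have hcast : Tendsto (fun M : ℕ => (M:ℝ)) atTop atTop := tendsto_natCast_atTop_atTop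
  have h1 : Tendsto (fun M : ℕ => (M:ℝ) * Real.log (1 + (-u^2) / M)) atTop (nhds (-u^2)) :=
    (Real.tendsto_mul_log_one_add_div_atTop (-u^2)).comp hcast
  have h2 : Tendsto (fun M : ℕ => ((M:ℝ) - 3) / (2 * M)) atTop (nhds (1/2)) := by
    have h3 : Tendsto (fun M : ℕ => ((1:ℝ) - 3 / M) / 2) atTop (nhds ((1 - 0)/2)) :=
      ((tendsto_const_nhds.sub (tendsto_const_div_atTop_nhds_zero_nat 3)).div_const 2)
    rw [show (1:ℝ)/2 = (1-0)/2 by norm_num]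
    apply h3.congr'
    filter_upwards [eventually_ge_atTop 1] with M hM
    have hM0 : (0:ℝ) < M := Nat.cast_pos.mpr hM
    rw [div_eq_div_iff (by norm_num) (by positivity)]
    field_simp
  have h4 := h2.mul h1
  have h5 := (Real.continuous_exp.tendsto _).comp h4
  have hpt : Real.exp (1/2 * (-u^2)) = Real.exp (-u^2/2) := by ring_nf
  rw [hpt] at h5
  apply h5.congr'
  filter_upwards [eventually_ge_atTop (⌈u^2⌉₊ + 1)] with M hM
  have hu2 : u^2 < (M:ℝ) := by
    have h1' : u^2 ≤ (⌈u^2⌉₊ : ℝ) := Nat.le_ceil _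
    have h2' : ((⌈u^2⌉₊ : ℕ) : ℝ) + 1 ≤ (M:ℝ) := by exact_mod_cast hM
    linarith
  have hM0 : (0:ℝ) < M := by
    have := sq_nonneg u; linarith
  have hb : 0 < 1 - u^2/(M:ℝ) := by
    rw [sub_pos, div_lt_one hM0]; exact hu2
  simp only [Function.comp]
  rw [gfun, max_eq_left hb.le, Real.rpow_def_of_pos hb]
  congr 1
  have : 1 + (-u^2)/(M:ℝ) = 1 - u^2/(M:ℝ) := by ring
  rw [this]
  field_simp

lemma g_bound {M : ℕ} (hM : 12 ≤ M) (u : ℝ) : ‖gfun M u‖ ≤ Real.exp (-u^2/4) := by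
  rw [Real.norm_eq_abs, abs_of_nonneg (g_nonneg M u)]
  have h12 : (12:ℝ) ≤ M := by exact_mod_cast hM
  have hM0 : (0:ℝ) < M := by linarith
  have hq : (0:ℝ) ≤ ((M:ℝ)-3)/2 := by linarith
  have hmax_le : max (1 - u^2/(M:ℝ)) 0 ≤ Real.exp (-u^2/M) := by
    apply max_le
    · have h := Real.add_one_le_exp (-u^2/(M:ℝ))
      have h' : -u^2/(M:ℝ) = -(u^2/(M:ℝ)) := by ring
      rw [h'] at h ⊢
      linarith
    · positivity
  calc gfun M u ≤ (Real.exp (-u^2/M)) ^ (((M:ℝ)-3)/2) :=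
        Real.rpow_le_rpow (le_max_right _ _) hmax_le hq
    _ = Real.exp ((-u^2/M) * (((M:ℝ)-3)/2)) := (Real.exp_mul _ _).symm
    _ ≤ Real.exp (-u^2/4) := by
        apply Real.exp_le_exp.mpr
        have he : -u^2/(M:ℝ) * (((M:ℝ)-3)/2) = -(u^2 * (((M:ℝ)-3)/(2*(M:ℝ)))) := by ring
        have he2 : -u^2/4 = -(u^2 * (1/4)) := by ring
        rw [he, he2, neg_le_neg_iff]
        apply mul_le_mul_of_nonneg_left _ (sq_nonneg u)
        rw [div_le_div_iff₀ (by norm_num) (by positivity)]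
        linarith

lemma bound_integrable (a : ℝ) :
    IntegrableOn (fun u : ℝ => Real.exp (-u^2/4)) (Set.Ioi a) := by
  have h : Integrable (fun u : ℝ => Real.exp (-(1/4 : ℝ) * u^2)) := by
    exact integrable_exp_neg_mul_sq (by norm_num)
  have h2 : (fun u : ℝ => Real.exp (-u^2/4)) = (fun u : ℝ => Real.exp (-(1/4:ℝ) * u^2)) := by
    funext u; ring_nf
  rw [h2]
  exact h.integrableOn

lemma g_integral_tendsto (a : ℝ) :
    Tendsto (fun M : ℕ => ∫ u in Set.Ioi a, gfun M u) atTop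
      (nhds (∫ u in Set.Ioi a, Real.exp (-u^2/2))) := by
  apply MeasureTheory.tendsto_integral_filter_of_dominated_convergence
      (fun u => Real.exp (-u^2/4))
  · filter_upwards [eventually_ge_atTop 12] with M hM
    exact (g_cont (by omega)).aestronglyMeasurable
  · filter_upwards [eventually_ge_atTop 12] with M hM
    exact ae_of_all _ (fun u => g_bound hM u)
  · exact bound_integrable a
  · exact ae_of_all _ (fun u => g_tendsto u)

lemma g_supp {M : ℕ} (hM : 4 ≤ M) : HasCompactSupport (gfun M) := by
  apply HasCompactSupport.intro (isCompact_Icc (a := -Real.sqrt M) (b := Real.sqrt M))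
  intro u hu
  apply g_zero hM
  simp only [Set.mem_Icc, not_and_or, not_le] at hu
  have habs : Real.sqrt M < |u| := by
    rcases hu with h | h
    · calc Real.sqrt M < -u := by linarith
        _ ≤ |u| := by rw [abs]; exact le_max_right _ _
    · calc Real.sqrt M < u := h
        _ ≤ |u| := le_abs_self u
  calc (M:ℝ) = Real.sqrt M ^ 2 := (Real.sq_sqrt (Nat.cast_nonneg M)).symm
    _ ≤ |u| ^ 2 := by
        apply pow_le_pow_left₀ (Real.sqrt_nonneg _) habs.le
    _ = u ^ 2 := sq_abs u

lemma g_intOn {M : ℕ} (hM : 4 ≤ M) (s : Set ℝ) : IntegrableOn (gfun M) s :=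
  ((g_cont (by omega)).integrable_of_hasCompactSupport (g_supp hM)).integrableOn

lemma g_interval_eq {M : ℕ} (hM : 4 ≤ M) {a : ℝ} (ha : a ≤ Real.sqrt M) :
    ∫ u in a..(Real.sqrt M), gfun M u = ∫ u in Set.Ioi a, gfun M u := by
  rw [intervalIntegral.integral_of_le ha]
  rw [← Set.Ioc_union_Ioi_eq_Ioi ha]
  rw [MeasureTheory.setIntegral_union (Set.Ioc_disjoint_Ioi le_rfl) measurableSet_Ioi
    (g_intOn hM _) (g_intOn hM _)]
  have hz : ∫ u in Set.Ioi (Real.sqrt M), gfun M u = 0 := by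
    rw [MeasureTheory.setIntegral_congr_fun measurableSet_Ioi
      (g := fun _ => (0:ℝ)) (fun u hu => ?_), MeasureTheory.integral_zero]
    apply g_zero hM
    have hu : Real.sqrt M < u := hu
    have h0 : 0 ≤ Real.sqrt M := Real.sqrt_nonneg _
    calc (M:ℝ) = Real.sqrt M ^ 2 := (Real.sq_sqrt (Nat.cast_nonneg M)).symm
      _ ≤ u ^ 2 := by nlinarith
  rw [hz, add_zero]

lemma integrand_eq {M : ℕ} (hM : 4 ≤ M) {x : ℝ} (hx : 0 ≤ Real.sin x) :
    (Real.sqrt M * -Real.sin x) • gfun M (Real.sqrt M * Real.cos x)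
      = -(Real.sqrt M * Real.sin x ^ (M-2)) := by
  have hM0 : (0:ℝ) < M := by
    have : (4:ℝ) ≤ M := by exact_mod_cast hM
    linarith
  have h1 : 1 - (Real.sqrt M * Real.cos x)^2/(M:ℝ) = Real.sin x^2 := by
    have hp := Real.sin_sq_add_cos_sq x
    rw [mul_pow, Real.sq_sqrt hM0.le]
    field_simp
    nlinarith [hp, hM0]
  have h2 : (Real.sin x ^ 2 : ℝ) ^ (((M:ℝ)-3)/2) = Real.sin x ^ (M-3) := by
    rw [← Real.rpow_natCast (Real.sin x) 2, ← Real.rpow_mul hx]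
    have h2' : ((2:ℕ):ℝ) * (((M:ℝ)-3)/2) = ((M-3 : ℕ) : ℝ) := by
      push_cast [Nat.cast_sub (by omega : 3 ≤ M)]
      ring
    rw [h2', Real.rpow_natCast]
  simp only [gfun, h1, max_eq_left (sq_nonneg (Real.sin x)), h2, smul_eq_mul]
  have h3 : Real.sin x ^ (M-3) * Real.sin x = Real.sin x ^ (M-2) := by
    rw [← pow_succ]
    congr 1
    omega
  rw [← h3]
  ring

lemma cov {M : ℕ} (hM : 4 ≤ M) {θ : ℝ} (hθ0 : 0 ≤ θ) (hθ : θ ≤ π/2) :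
    ∫ φ in (0:ℝ)..θ, Real.sin φ ^ (M-2)
      = (Real.sqrt M)⁻¹ * ∫ u in (Real.sqrt M * Real.cos θ)..(Real.sqrt M), gfun M u := by
  have hs : (0:ℝ) < Real.sqrt M := by
    apply Real.sqrt_pos.mpr
    have : (4:ℝ) ≤ M := by exact_mod_cast hM
    linarith
  have key := intervalIntegral.integral_comp_smul_deriv (a := (0:ℝ)) (b := θ)
    (f := fun x => Real.sqrt M * Real.cos x) (f' := fun x => Real.sqrt M * -Real.sin x)
    (g := gfun M)
    (fun x _ => (Real.hasDerivAt_cos x).const_mul (Real.sqrt M))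
    ((continuous_const.mul continuous_sin.neg).continuousOn)
    (g_cont (by omega))
  simp only [Real.cos_zero, mul_one, Function.comp] at key
  have hL : ∫ x in (0:ℝ)..θ, (Real.sqrt M * -Real.sin x) • gfun M (Real.sqrt M * Real.cos x)
      = -(Real.sqrt M * ∫ φ in (0:ℝ)..θ, Real.sin φ ^ (M-2)) := by
    rw [← intervalIntegral.integral_const_mul, ← intervalIntegral.integral_neg]
    apply intervalIntegral.integral_congr
    intro x hx
    rw [Set.uIcc_of_le hθ0] at hx
    have hsin : 0 ≤ Real.sin x :=
      Real.sin_nonneg_of_nonneg_of_le_pi hx.1 (by linarith [hx.2, Real.pi_pos])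
    exact integrand_eq hM hsin
  rw [hL] at key
  have hR : ∫ u in (Real.sqrt M)..(Real.sqrt M * Real.cos θ), gfun M u
      = -∫ u in (Real.sqrt M * Real.cos θ)..(Real.sqrt M), gfun M u :=
    intervalIntegral.integral_symm _ _
  rw [hR] at key
  have := neg_injective key
  rw [← this, inv_mul_cancel_left₀ hs.ne']

end Helpers

open MeasureTheory Set in
/-- Fix C > 0 and let θ_M ∈ (0, π/2) satisfy cos θ_M = C/√M (for M > C²). Then
(∫_0^{θ_M} sin^{M−2}φ dφ) / (∫_0^{π/2} sin^{M−2}φ dφ) → 2Q(C) as M → ∞, where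
Q(C) = (1/√(2π)) ∫_C^∞ e^{−u²/2} du. -/
theorem stmt_12 (C : ℝ) (hC : 0 < C) :
    Tendsto (fun M : ℕ =>
      (∫ φ in (0 : ℝ)..(Real.arccos (C / Real.sqrt M)), Real.sin φ ^ (M - 2)) /
      (∫ φ in (0 : ℝ)..(Real.pi / 2), Real.sin φ ^ (M - 2)))
      atTop
      (nhds (2 * ((1 / Real.sqrt (2 * Real.pi)) *
        ∫ u in Set.Ioi C, Real.exp (-u ^ 2 / 2)))) := by
  have h2pi : (0:ℝ) < Real.sqrt (2*π) := Real.sqrt_pos.mpr (by positivity)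
  have hB : ∫ u in Set.Ioi (0:ℝ), Real.exp (-u^2/2) = Real.sqrt (2*π) / 2 := by
    have h := integral_gaussian_Ioi (1/2 : ℝ)
    have heq : ∀ u : ℝ, Real.exp (-(1/2:ℝ) * u^2) = Real.exp (-u^2/2) := by
      intro u; ring_nf
    simp only [heq] at h
    rw [h, show π/(1/2:ℝ) = 2*π by ring]
  have hN := g_integral_tendsto C
  have hD := g_integral_tendsto 0
  rw [hB] at hD
  have hBne : Real.sqrt (2*π)/2 ≠ 0 := by positivity
  have hlim := hN.div hD hBne
  have hval : (∫ u in Set.Ioi C, Real.exp (-u^2/2)) / (Real.sqrt (2*π)/2)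
      = 2 * ((1/Real.sqrt (2*π)) * ∫ u in Set.Ioi C, Real.exp (-u^2/2)) := by
    field_simp
  rw [hval] at hlim
  apply hlim.congr'
  filter_upwards [eventually_ge_atTop 12, eventually_ge_atTop (⌈C^2⌉₊+1)] with M h12 hMC
  have hM4 : 4 ≤ M := by omega
  have hs : (0:ℝ) < Real.sqrt M := by
    apply Real.sqrt_pos.mpr
    have : (12:ℝ) ≤ M := by exact_mod_cast h12
    linarith
  have hCM : C ≤ Real.sqrt M := by
    rw [show C = Real.sqrt (C^2) by rw [Real.sqrt_sq hC.le]]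
    apply Real.sqrt_le_sqrt
    have h1 : C^2 ≤ (⌈C^2⌉₊ : ℝ) := Nat.le_ceil _
    have h2 : ((⌈C^2⌉₊:ℕ):ℝ) + 1 ≤ (M:ℝ) := by exact_mod_cast hMC
    linarith
  have hfrac0 : 0 ≤ C / Real.sqrt M := by positivity
  have hfrac1 : C / Real.sqrt M ≤ 1 := (div_le_one hs).mpr hCM
  have hcosθ : Real.sqrt M * Real.cos (Real.arccos (C / Real.sqrt M)) = C := by
    rw [Real.cos_arccos (by linarith) hfrac1, mul_div_cancel₀ _ hs.ne']
  have hnum : ∫ φ in (0:ℝ)..(Real.arccos (C / Real.sqrt M)), Real.sin φ ^ (M-2)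
      = (Real.sqrt M)⁻¹ * ∫ u in Set.Ioi C, gfun M u := by
    rw [cov hM4 (Real.arccos_nonneg _) (Real.arccos_le_pi_div_two.mpr hfrac0), hcosθ,
      g_interval_eq hM4 hCM]
  have hden : ∫ φ in (0:ℝ)..(π/2), Real.sin φ ^ (M-2)
      = (Real.sqrt M)⁻¹ * ∫ u in Set.Ioi (0:ℝ), gfun M u := by
    rw [cov hM4 (by positivity) le_rfl, Real.cos_pi_div_two, mul_zero,
      g_interval_eq hM4 hs.le]
  rw [hnum, hden, mul_div_mul_left _ _ (inv_ne_zero hs.ne')]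
  rfl
end
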